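/- There exists a constant c ∈ (0,1) such that for all m, n, k ∈ ℕ: P(τ_k^{(m)} ≤ n) ≤ ( min( n·(log m + 1)/(c·k·m), 1) )^{c·k/(log m + 1)}, where P(τ_k^{(m)} ≤ n) := Σ_{j=0}^n P(τ_k^{(m)} = j). -/

import Mathlib

open Filter MeasureTheory Real
open scoped Classical Topology

/-- `R_N := Σ_{n=1}^N r(n)`. -/
noncomputable def RR (r : ℕ → ℝ) (N : ℕ) : ℝ := ∑ n ∈ Finset.Icc 1 N, r n

/-- `P(τ_k^{(N)} = n)` for the renewal process with increment law `r(·)/R_N` on `{1,…,N}`: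
for `k ≥ 1` it is `R_N^{-k} Σ_{(n_1,…,n_k) ∈ {1,…,N}^k, n_1+⋯+n_k=n} Π_i r(n_i)`,
and for `k = 0` it is `1_{n=0}`. -/
noncomputable def tauP (r : ℕ → ℝ) (N k n : ℕ) : ℝ :=
  if k = 0 then (if n = 0 then 1 else 0)
  else (RR r N)⁻¹ ^ k *
    ∑ f ∈ (Fintype.piFinset fun _ : Fin k => Finset.Icc 1 N).filter
        (fun f => ∑ i, f i = n),
      ∏ i, r (f i)

/-- `P(τ_k^{(m)} ≤ n) := Σ_{j=0}^n P(τ_k^{(m)} = j)`. -/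
noncomputable def tauCdf (r : ℕ → ℝ) (m k n : ℕ) : ℝ :=
  ∑ j ∈ Finset.range (n + 1), tauP r m k j

lemma harmonic_lb (J : ℕ) (hJ : 1 ≤ J) : ∀ m : ℕ,
    Real.log (m + 1) - Real.log J ≤ ∑ j ∈ Finset.Icc J m, (1 : ℝ) / j := by
  intro m
  induction m with
  | zero =>
    rw [Finset.Icc_eq_empty (by omega), Finset.sum_empty]
    simp only [Nat.cast_zero, zero_add, Real.log_one]
    have : (0:ℝ) ≤ Real.log J := Real.log_nonneg (by exact_mod_cast hJ)
    linarith
  | succ m ih =>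
    rcases le_or_gt J (m + 1) with h | h
    · rw [Finset.sum_Icc_succ_top h]
      have h1 : Real.log ((m:ℝ) + 1 + 1) - Real.log ((m:ℝ) + 1) ≤ 1 / ((m:ℝ) + 1) := by
        rw [← Real.log_div (by positivity) (by positivity)]
        have := Real.log_le_sub_one_of_pos
          (x := ((m:ℝ) + 1 + 1) / ((m:ℝ) + 1)) (by positivity)
        have hm : (0:ℝ) < (m:ℝ) + 1 := by positivity
        calc Real.log (((m:ℝ) + 1 + 1) / ((m:ℝ) + 1)) ≤ ((m:ℝ)+1+1)/((m:ℝ)+1) - 1 := this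
        _ = 1 / ((m:ℝ)+1) := by field_simp; ring
      push_cast
      push_cast at ih
      linarith
    · rw [Finset.Icc_eq_empty (by omega), Finset.sum_empty]
      have : Real.log ((m:ℝ) + 1 + 1) ≤ Real.log J := by
        apply Real.log_le_log (by positivity)
        exact_mod_cast by omega
      push_cast
      linarith

lemma harmonic_ub : ∀ m : ℕ, ∑ j ∈ Finset.Icc 1 m, (1 : ℝ) / j ≤ Real.log m + 1 := by
  intro m
  induction m with
  | zero => simp
  | succ m ih =>
    rcases Nat.eq_zero_or_pos m with rfl | hm
    · norm_num
    · rw [Finset.sum_Icc_succ_top (by omega)]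
      have h1 : 1 / ((m:ℝ) + 1) ≤ Real.log ((m:ℝ) + 1) - Real.log m := by
        rw [← Real.log_div (by positivity) (by exact_mod_cast hm.ne')]
        have hmpos : (0:ℝ) < m := by exact_mod_cast hm
        have := Real.log_le_sub_one_of_pos (x := (m:ℝ) / ((m:ℝ) + 1)) (by positivity)
        have h2 : Real.log ((m:ℝ)/((m:ℝ)+1)) = - Real.log (((m:ℝ)+1)/(m:ℝ)) := by
          rw [← Real.log_inv]; congr 1; field_simp
        have h3 : (m:ℝ)/((m:ℝ)+1) - 1 = -(1/((m:ℝ)+1)) := by field_simp; ring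
        rw [h2, h3] at this
        linarith
      push_cast
      push_cast at ih
      linarith

lemma key_expand (r : ℕ → ℝ) (m k : ℕ) (l : ℝ) (M : ℕ) (hM : k * m ≤ M) :
    ∑ j ∈ Finset.range (M + 1), Real.exp (-(l * j)) *
        ∑ f ∈ (Fintype.piFinset fun _ : Fin k => Finset.Icc 1 m).filter
          (fun f => ∑ i, f i = j), ∏ i, r (f i)
    = (∑ j ∈ Finset.Icc 1 m, Real.exp (-(l * j)) * r j) ^ k := by
  have hmaps : ∀ f ∈ Fintype.piFinset fun _ : Fin k => Finset.Icc 1 m,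
      (∑ i, f i) ∈ Finset.range (M + 1) := by
    intro f hf
    rw [Finset.mem_range]
    have h1 : ∑ i, f i ≤ k * m := by
      calc ∑ i, f i ≤ (Finset.univ : Finset (Fin k)).card • m := by
            apply Finset.sum_le_card_nsmul
            intro i _
            exact (Finset.mem_Icc.mp ((Fintype.mem_piFinset).mp hf i)).2
        _ = k * m := by simp [smul_eq_mul]
    omega
  have step1 : ∀ j ∈ Finset.range (M + 1), Real.exp (-(l * j)) *
        ∑ f ∈ (Fintype.piFinset fun _ : Fin k => Finset.Icc 1 m).filter
          (fun f => ∑ i, f i = j), ∏ i, r (f i)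
      = ∑ f ∈ (Fintype.piFinset fun _ : Fin k => Finset.Icc 1 m).filter
          (fun f => ∑ i, f i = j), ∏ i, (Real.exp (-(l * f i)) * r (f i)) := by
    intro j _
    rw [Finset.mul_sum]
    apply Finset.sum_congr rfl
    intro f hf
    have hsum : (∑ i, f i) = j := (Finset.mem_filter.mp hf).2
    rw [Finset.prod_mul_distrib, ← Real.exp_sum]
    congr 2
    rw [← hsum]
    push_cast
    rw [Finset.mul_sum]
    exact (Finset.sum_neg_distrib _).symm
  rw [Finset.sum_congr rfl step1, Finset.sum_fiberwise_of_maps_to hmaps]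
  have hps : (∑ j ∈ Finset.Icc 1 m, Real.exp (-(l * j)) * r j) ^ k
      = ∑ f ∈ (Fintype.piFinset fun _ : Fin k => Finset.Icc 1 m),
          ∏ i, (Real.exp (-(l * (f i))) * r (f i)) := by
    calc (∑ j ∈ Finset.Icc 1 m, Real.exp (-(l * j)) * r j) ^ k
        = ∏ _i : Fin k, ∑ j ∈ Finset.Icc 1 m, Real.exp (-(l * j)) * r j := by
          rw [Finset.prod_const, Finset.card_univ, Fintype.card_fin]
      _ = _ := Finset.prod_univ_sum _ _
  rw [hps]

lemma RR_pos (r : ℕ → ℝ) (hr : ∀ n, 0 < r n) (m : ℕ) (hm : 1 ≤ m) : 0 < RR r m :=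
  Finset.sum_pos (fun j _ => hr j) ⟨1, Finset.mem_Icc.mpr ⟨le_refl 1, hm⟩⟩

lemma chernoff (r : ℕ → ℝ) (hr : ∀ n, 0 < r n) (m k n : ℕ) (hm : 1 ≤ m) (hk : k ≠ 0)
    (l : ℝ) (hl : 0 ≤ l) :
    tauCdf r m k n ≤ Real.exp (l * n) *
      ((∑ j ∈ Finset.Icc 1 m, Real.exp (-(l * j)) * r j) / RR r m) ^ k := by
  have hR : 0 < RR r m := RR_pos r hr m hm
  set A : ℕ → ℝ := fun j => ∑ f ∈ (Fintype.piFinset fun _ : Fin k => Finset.Icc 1 m).filter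
        (fun f => ∑ i, f i = j), ∏ i, r (f i) with hA
  have hA0 : ∀ j, 0 ≤ A j := fun j =>
    Finset.sum_nonneg fun f _ => Finset.prod_nonneg fun i _ => (hr _).le
  have htau : ∀ j, tauP r m k j = (RR r m)⁻¹ ^ k * A j := by
    intro j
    simp only [tauP, if_neg hk, hA]
  have h1 : ∀ j ∈ Finset.range (n+1), (RR r m)⁻¹ ^ k * A j ≤
      Real.exp (l * n) * ((RR r m)⁻¹ ^ k * (Real.exp (-(l * j)) * A j)) := by
    intro j hj
    have hj' : (j:ℝ) ≤ n := by exact_mod_cast Nat.lt_succ_iff.mp (Finset.mem_range.mp hj)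
    have he : 1 ≤ Real.exp (l * n) * Real.exp (-(l * j)) := by
      rw [← Real.exp_add]
      rw [show (1:ℝ) = Real.exp 0 from (Real.exp_zero).symm]
      apply Real.exp_le_exp.mpr
      nlinarith [mul_le_mul_of_nonneg_left hj' hl]
    have hnn : 0 ≤ (RR r m)⁻¹ ^ k * A j :=
      mul_nonneg (by positivity) (hA0 j)
    calc (RR r m)⁻¹ ^ k * A j = 1 * ((RR r m)⁻¹ ^ k * A j) := (one_mul _).symm
      _ ≤ (Real.exp (l*n) * Real.exp (-(l*j))) * ((RR r m)⁻¹ ^ k * A j) :=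
          mul_le_mul_of_nonneg_right he hnn
      _ = Real.exp (l*n) * ((RR r m)⁻¹ ^ k * (Real.exp (-(l*j)) * A j)) := by ring
  calc tauCdf r m k n = ∑ j ∈ Finset.range (n+1), (RR r m)⁻¹ ^ k * A j := by
        rw [tauCdf]; exact Finset.sum_congr rfl fun j _ => htau j
    _ ≤ ∑ j ∈ Finset.range (n+1),
        Real.exp (l*n) * ((RR r m)⁻¹ ^ k * (Real.exp (-(l*j)) * A j)) :=
        Finset.sum_le_sum h1
    _ ≤ ∑ j ∈ Finset.range (k*m+n+1),
        Real.exp (l*n) * ((RR r m)⁻¹ ^ k * (Real.exp (-(l*j)) * A j)) := by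
        apply Finset.sum_le_sum_of_subset_of_nonneg
        · apply Finset.range_subset_range.mpr; omega
        · intro j _ _
          exact mul_nonneg (Real.exp_pos _).le (mul_nonneg (by positivity)
            (mul_nonneg (Real.exp_pos _).le (hA0 j)))
    _ = Real.exp (l*n) * ((RR r m)⁻¹ ^ k *
        ∑ j ∈ Finset.range (k*m+n+1), Real.exp (-(l*j)) * A j) := by
        rw [← Finset.mul_sum, ← Finset.mul_sum]
    _ = Real.exp (l*n) * ((RR r m)⁻¹ ^ k *
        (∑ j ∈ Finset.Icc 1 m, Real.exp (-(l*j)) * r j) ^ k) := by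
        rw [hA, key_expand r m k l (k*m+n) (by omega)]
    _ = _ := by rw [div_pow]; field_simp; rw [one_div, inv_pow, mul_right_comm, inv_mul_cancel₀ (pow_ne_zero _ hR.ne'), one_mul]

lemma tauCdf_eq_zero (r : ℕ → ℝ) (m k n : ℕ) (hk : k ≠ 0) (hn : n < k) :
    tauCdf r m k n = 0 := by
  rw [tauCdf]
  apply Finset.sum_eq_zero
  intro j hj
  have hj' : j < k := by
    have := Finset.mem_range.mp hj; omega
  simp only [tauP, if_neg hk]
  rw [Finset.sum_eq_zero, mul_zero]
  intro f hf
  exfalso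
  obtain ⟨hfp, hfs⟩ := Finset.mem_filter.mp hf
  have hge : k ≤ ∑ i, f i := by
    calc k = ∑ _i : Fin k, 1 := by simp
      _ ≤ ∑ i, f i := Finset.sum_le_sum fun i _ =>
          (Finset.mem_Icc.mp ((Fintype.mem_piFinset).mp hfp i)).1
  omega

lemma bound2 (r : ℕ → ℝ) (hr : ∀ n, 0 < r n) (c0 : ℝ)
    (hc0 : ∀ j : ℕ, 1 ≤ j → c0 ≤ j * r j) (hc0pos : 0 < c0)
    (m J : ℕ) (hJ1 : 1 ≤ J) (hJm : J ≤ m) (l : ℝ) (hl : 0 ≤ l) (hlJ : 1 ≤ l * J) :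
    (1 - Real.exp (-1)) * c0 * (Real.log (m+1) - Real.log J)
      ≤ RR r m - ∑ j ∈ Finset.Icc 1 m, Real.exp (-(l * j)) * r j := by
  have he1 : Real.exp (-1:ℝ) < 1 := by
    rw [show (1:ℝ) = Real.exp 0 from (Real.exp_zero).symm]
    exact Real.exp_lt_exp.mpr (by norm_num)
  have hmain : ∀ j ∈ Finset.Icc J m,
      (1 - Real.exp (-1)) * c0 * ((1:ℝ)/(j:ℝ)) ≤ (1 - Real.exp (-(l * j))) * r j := by
    intro j hj
    obtain ⟨hJj, hjm⟩ := Finset.mem_Icc.mp hj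
    have hj1 : 1 ≤ j := le_trans hJ1 hJj
    have hjR : (1:ℝ) ≤ (j:ℝ) := by exact_mod_cast hj1
    have hexp : Real.exp (-(l * j)) ≤ Real.exp (-1) := by
      apply Real.exp_le_exp.mpr
      have : l * J ≤ l * j := by
        apply mul_le_mul_of_nonneg_left _ hl
        exact_mod_cast hJj
      linarith
    have hrj : c0 / j ≤ r j := by
      rw [div_le_iff₀ (by linarith)]
      have := hc0 j hj1
      linarith [this, mul_comm (r j) (j:ℝ)]
    have h1 : (0:ℝ) ≤ 1 - Real.exp (-1) := by linarith
    have h2 : (0:ℝ) ≤ c0 / j := by positivity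
    calc (1 - Real.exp (-1)) * c0 * ((1:ℝ)/(j:ℝ))
        = (1 - Real.exp (-1)) * (c0 / j) := by ring
      _ ≤ (1 - Real.exp (-(l * j))) * r j := by
          apply mul_le_mul (by linarith) hrj h2 (by linarith [hexp, Real.exp_pos (-(l*(j:ℝ)))])
  calc (1 - Real.exp (-1)) * c0 * (Real.log (m+1) - Real.log J)
      ≤ (1 - Real.exp (-1)) * c0 * ∑ j ∈ Finset.Icc J m, (1:ℝ)/j := by
        apply mul_le_mul_of_nonneg_left (harmonic_lb J hJ1 m)
        exact mul_nonneg (by linarith) hc0pos.le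
    _ = ∑ j ∈ Finset.Icc J m, (1 - Real.exp (-1)) * c0 * ((1:ℝ)/j) := Finset.mul_sum _ _ _
    _ ≤ ∑ j ∈ Finset.Icc J m, (1 - Real.exp (-(l * j))) * r j := Finset.sum_le_sum hmain
    _ ≤ ∑ j ∈ Finset.Icc 1 m, (1 - Real.exp (-(l * j))) * r j := by
        apply Finset.sum_le_sum_of_subset_of_nonneg
        · exact Finset.Icc_subset_Icc hJ1 le_rfl
        · intro j hjm _
          have hj1 : 1 ≤ j := (Finset.mem_Icc.mp hjm).1
          have : Real.exp (-(l * j)) ≤ 1 := by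
            rw [show (1:ℝ) = Real.exp 0 from (Real.exp_zero).symm]
            apply Real.exp_le_exp.mpr
            have : (0:ℝ) ≤ l * j := mul_nonneg hl (by positivity)
            linarith
          exact mul_nonneg (by linarith) (hr j).le
    _ = RR r m - ∑ j ∈ Finset.Icc 1 m, Real.exp (-(l * j)) * r j := by
        rw [RR, ← Finset.sum_sub_distrib]
        apply Finset.sum_congr rfl
        intro j _
        ring

lemma master (r : ℕ → ℝ) (hr : ∀ n, 0 < r n) (c0 C : ℝ)
    (hc0 : ∀ j : ℕ, 1 ≤ j → c0 ≤ j * r j) (hc0pos : 0 < c0) (hCpos : 0 < C)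
    (m k n J : ℕ) (hRC : RR r m ≤ C * (Real.log m + 1))
    (hm : 1 ≤ m) (hk : k ≠ 0) (hJ1 : 1 ≤ J) (hJm : J ≤ m)
    (l : ℝ) (hl0 : 0 ≤ l) (hlJ : 1 ≤ l * J) :
    tauCdf r m k n ≤ Real.exp (l * n -
      k * ((1 - Real.exp (-1)) * c0 * (Real.log (m+1) - Real.log J) / (C * (Real.log m + 1)))) := by
  set L : ℝ := Real.log m + 1 with hLdef
  have hL1 : 1 ≤ L := by
    have : (0:ℝ) ≤ Real.log m := Real.log_nonneg (by exact_mod_cast hm)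
    rw [hLdef]; linarith
  have hR : 0 < RR r m := RR_pos r hr m hm
  set S : ℝ := ∑ j ∈ Finset.Icc 1 m, Real.exp (-(l * j)) * r j with hSdef
  have hS : 0 < S :=
    Finset.sum_pos (fun j _ => mul_pos (Real.exp_pos _) (hr j))
      ⟨1, Finset.mem_Icc.mpr ⟨le_refl 1, hm⟩⟩
  set X : ℝ := Real.log (m+1) - Real.log J with hXdef
  have hX0 : 0 ≤ X := by
    rw [hXdef]
    have : Real.log J ≤ Real.log (m+1) := by
      apply Real.log_le_log (by positivity)
      push_cast
      have : (J:ℝ) ≤ m := by exact_mod_cast hJm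
      linarith
    linarith
  set c8 : ℝ := (1 - Real.exp (-1)) * c0 with hc8def
  have he1 : Real.exp (-1:ℝ) < 1 := by
    rw [show (1:ℝ) = Real.exp 0 from (Real.exp_zero).symm]
    exact Real.exp_lt_exp.mpr (by norm_num)
  have hc8pos : 0 < c8 := mul_pos (by linarith) hc0pos
  have hb2 : c8 * X ≤ RR r m - S :=
    bound2 r hr c0 hc0 hc0pos m J hJ1 hJm l hl0 hlJ
  have hRS : 0 ≤ RR r m - S := le_trans (by positivity) hb2
  have hdiv : c8 * X / (C * L) ≤ (RR r m - S) / RR r m := by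
    apply div_le_div₀ hRS hb2 hR
    calc RR r m ≤ C * (Real.log m + 1) := hRC
      _ = C * L := rfl
  have hch := chernoff r hr m k n hm hk l hl0
  rw [← hSdef] at hch
  have hq : (S / RR r m) ^ k ≤ Real.exp ((k:ℝ) * (S / RR r m - 1)) := by
    calc (S / RR r m) ^ k ≤ (Real.exp (S / RR r m - 1)) ^ k :=
          pow_le_pow_left₀ (div_pos hS hR).le
            (by linarith [Real.add_one_le_exp (S / RR r m - 1)]) k
      _ = Real.exp ((k:ℝ) * (S / RR r m - 1)) := (Real.exp_nat_mul _ k).symm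
  calc tauCdf r m k n ≤ Real.exp (l * n) * (S / RR r m) ^ k := hch
    _ ≤ Real.exp (l * n) * Real.exp ((k:ℝ) * (S / RR r m - 1)) :=
        mul_le_mul_of_nonneg_left hq (Real.exp_pos _).le
    _ = Real.exp (l * n + (k:ℝ) * (S / RR r m - 1)) := (Real.exp_add _ _).symm
    _ ≤ Real.exp (l * n - k * (c8 * X / (C * L))) := by
        apply Real.exp_le_exp.mpr
        have h1 : S / RR r m - 1 = -((RR r m - S) / RR r m) := by
          field_simp
          ring
        rw [h1]
        have h2 : (k:ℝ) * (c8 * X / (C * L)) ≤ (k:ℝ) * ((RR r m - S) / RR r m) :=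
          mul_le_mul_of_nonneg_left hdiv (by positivity)
        linarith


lemma exists_bounds (a : ℝ) (ha : 0 < a) (r : ℕ → ℝ) (hr : ∀ n, 0 < r n)
    (hra : Tendsto (fun n : ℕ => (n : ℝ) * r n) atTop (nhds a)) :
    ∃ c0 C : ℝ, 0 < c0 ∧ c0 ≤ C ∧
      ∀ j : ℕ, 1 ≤ j → c0 ≤ j * r j ∧ (j:ℝ) * r j ≤ C := by
  have h := hra.eventually (Ioo_mem_nhds (by linarith : a/2 < a) (by linarith : a < 2*a))
  rw [eventually_atTop] at h
  obtain ⟨N, hN⟩ := h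
  set N' := max N 1 with hN'
  set F : Finset ℝ := (Finset.Icc 1 N').image (fun j : ℕ => (j:ℝ) * r j) with hF
  have hFne : F.Nonempty := ⟨(1:ℝ) * r 1, Finset.mem_image.mpr
    ⟨1, Finset.mem_Icc.mpr ⟨le_refl 1, le_max_right N 1⟩, by norm_num⟩⟩
  refine ⟨min (a/2) (F.min' hFne), max (2*a) (F.max' hFne), ?_, ?_, ?_⟩
  · apply lt_min (by linarith)
    have hmem := F.min'_mem hFne
    obtain ⟨j, hj, hje⟩ := Finset.mem_image.mp hmem
    rw [← hje]
    have hj1 : 1 ≤ j := (Finset.mem_Icc.mp hj).1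
    have : (0:ℝ) < j := by exact_mod_cast hj1
    exact mul_pos this (hr j)
  · calc min (a/2) (F.min' hFne) ≤ F.min' hFne := min_le_right _ _
      _ ≤ (1:ℝ) * r 1 := Finset.min'_le _ _ (Finset.mem_image.mpr
          ⟨1, Finset.mem_Icc.mpr ⟨le_refl 1, le_max_right N 1⟩, by norm_num⟩)
      _ ≤ F.max' hFne := Finset.le_max' _ _ (Finset.mem_image.mpr
          ⟨1, Finset.mem_Icc.mpr ⟨le_refl 1, le_max_right N 1⟩, by norm_num⟩)
      _ ≤ max (2*a) (F.max' hFne) := le_max_right _ _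
  · intro j hj
    rcases le_or_gt j N' with hle | hgt
    · have hmem : ((j:ℝ) * r j) ∈ F := Finset.mem_image.mpr
        ⟨j, Finset.mem_Icc.mpr ⟨hj, hle⟩, rfl⟩
      constructor
      · exact le_trans (min_le_right _ _) (Finset.min'_le _ _ hmem)
      · exact le_trans (Finset.le_max' _ _ hmem) (le_max_right _ _)
    · have hjN : N ≤ j := by omega
      have := hN j hjN
      obtain ⟨h1, h2⟩ := this
      exact ⟨le_trans (min_le_left _ _) h1.le, le_trans h2.le (le_max_left _ _)⟩


set_option maxHeartbeats 1000000 in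
/-- Lemma 6.5 (lower tail estimate): there is `c ∈ (0,1)` with
`P(τ_k^{(m)} ≤ n) ≤ (min(n(log m + 1)/(ckm), 1))^{ck/(log m + 1)}` for all `m, n, k ∈ ℕ`. -/
theorem lower_tail_estimate
    (a : ℝ) (ha : 0 < a) (r : ℕ → ℝ) (hr : ∀ n, 0 < r n)
    (hra : Tendsto (fun n : ℕ => (n : ℝ) * r n) atTop (nhds a)) :
    ∃ c : ℝ, c ∈ Set.Ioo (0:ℝ) 1 ∧ ∀ m n k : ℕ, 1 ≤ m → 1 ≤ n → 1 ≤ k →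
      tauCdf r m k n ≤
        (min ((n : ℝ) * (Real.log m + 1) / (c * k * m)) 1) ^
          (c * k / (Real.log m + 1)) := by
  obtain ⟨c0, C, hc0pos, hc0C, hbound⟩ := exists_bounds a ha r hr hra
  have hCpos : 0 < C := lt_of_lt_of_le hc0pos hc0C
  have hc0' : ∀ j : ℕ, 1 ≤ j → c0 ≤ j * r j := fun j hj => (hbound j hj).1
  set e : ℝ := Real.exp 1 with hedef
  have he2 : (2:ℝ) ≤ e := by have := Real.add_one_le_exp (1:ℝ); rw [hedef]; linarith
  have hepos : (0:ℝ) < e := by linarith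
  set c : ℝ := c0 / (16 * e * C) with hcdef
  have hcpos : 0 < c := by rw [hcdef]; positivity
  have hc0eq : c0 = 16*e*C*c := by rw [hcdef]; field_simp
  have hc1 : c < 1 := by
    rw [hcdef, div_lt_one (by positivity)]
    nlinarith [hc0C, hCpos]
  -- exp(-1) ≤ 1/2
  have hexpneg : Real.exp (-1:ℝ) ≤ 1/2 := by
    rw [Real.exp_neg]
    have h' : e * e⁻¹ = 1 := mul_inv_cancel₀ (ne_of_gt hepos)
    have hip : (0:ℝ) < e⁻¹ := by positivity
    nlinarith
  clear_value e c
  refine ⟨c, ⟨hcpos, hc1⟩, ?_⟩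
  intro m n k hm hn hk
  set L : ℝ := Real.log m + 1 with hLdef
  have hlogm : (0:ℝ) ≤ Real.log m := Real.log_nonneg (by exact_mod_cast hm)
  have hL1 : (1:ℝ) ≤ L := by rw [hLdef]; linarith
  have hLpos : (0:ℝ) < L := by linarith
  clear_value L
  have hmR : (1:ℝ) ≤ (m:ℝ) := by exact_mod_cast hm
  have hnR : (1:ℝ) ≤ (n:ℝ) := by exact_mod_cast hn
  have hkR : (1:ℝ) ≤ (k:ℝ) := by exact_mod_cast hk
  have hminn : 0 ≤ min ((n:ℝ) * L / (c*k*m)) 1 := le_min (by positivity) one_pos.le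
  rcases lt_or_ge n k with hnk | hkn
  · rw [tauCdf_eq_zero r m k n (by omega) hnk]
    exact Real.rpow_nonneg hminn _
  have hknR : (k:ℝ) ≤ (n:ℝ) := by exact_mod_cast hkn
  have hRC : RR r m ≤ C * (Real.log m + 1) := by
    rw [RR]
    calc ∑ j ∈ Finset.Icc 1 m, r j ≤ ∑ j ∈ Finset.Icc 1 m, C * ((1:ℝ)/j) := by
          apply Finset.sum_le_sum
          intro j hj
          have hj1 : 1 ≤ j := (Finset.mem_Icc.mp hj).1
          have hjR : (1:ℝ) ≤ (j:ℝ) := by exact_mod_cast hj1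
          have h2 := (hbound j hj1).2
          rw [mul_one_div, le_div_iff₀ (by linarith)]
          nlinarith
      _ = C * ∑ j ∈ Finset.Icc 1 m, (1:ℝ)/j := (Finset.mul_sum _ _ _).symm
      _ ≤ C * (Real.log m + 1) := mul_le_mul_of_nonneg_left (harmonic_ub m) hCpos.le
  have hc8ge : 8*e*c*C ≤ (1 - Real.exp (-1)) * c0 := by nlinarith [hc0pos, hexpneg]
  have hc8pos : 0 < (1 - Real.exp (-1)) * c0 := by nlinarith [hc0pos, hexpneg]
  rcases le_or_gt (c*k*m) ((n:ℝ)*L) with hA | hB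
  · -- regime A : min = 1, tauCdf ≤ 1
    have hmin : min ((n:ℝ) * L / (c*k*m)) 1 = 1 := by
      apply min_eq_right
      rw [le_div_iff₀ (by positivity)]
      linarith
    rw [hmin, Real.one_rpow]
    have h0 : (∑ j ∈ Finset.Icc 1 m, Real.exp (-((0:ℝ) * j)) * r j) = RR r m := by
      rw [RR]; apply Finset.sum_congr rfl; intro j _; norm_num
    have hch := chernoff r hr m k n hm (by omega) 0 le_rfl
    rw [h0] at hch
    have hR : 0 < RR r m := RR_pos r hr m hm
    rw [div_self hR.ne', one_pow, zero_mul, Real.exp_zero, mul_one] at hch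
    exact hch
  · -- regime B
    set u : ℝ := (n:ℝ) * L / (c*k*m) with hudef
    have hupos : 0 < u := by rw [hudef]; positivity
    have hu1 : u < 1 := by rw [hudef, div_lt_one (by positivity)]; exact hB
    have hmin : min u 1 = u := min_eq_left hu1.le
    rw [hmin, Real.rpow_def_of_pos hupos]
    set v : ℝ := - Real.log u with hvdef
    have hv : 0 < v := by rw [hvdef]; linarith [Real.log_neg hupos hu1]
    have hlogu : Real.log u = -v := by rw [hvdef]; ring
    clear_value u v
    -- m ≥ 2
    have hm2 : 2 ≤ m := by
      rcases Nat.lt_or_ge m 2 with hlt | hge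
      · exfalso
        have hm1 : m = 1 := by omega
        have hmr1 : (m:ℝ) = 1 := by rw [hm1]; norm_num
        have hLr : L = 1 := by rw [hLdef, hm1]; norm_num
        rw [hmr1, hLr] at hB
        have hck : c * (k:ℝ) < 1 * (k:ℝ) :=
          mul_lt_mul_of_pos_right hc1 (by linarith)
        linarith
      · exact hge
    have hm2R : (2:ℝ) ≤ (m:ℝ) := by exact_mod_cast hm2
    have hlog2 : (1/2:ℝ) ≤ L - 1 := by
      have h1 : Real.log 2 ≤ Real.log m := Real.log_le_log two_pos hm2R
      have h2 := Real.log_two_gt_d9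
      rw [hLdef]; linarith
    -- v ≤ L - 1
    have hvL : v ≤ L - 1 := by
      have h1 : L / (c*m) ≤ u := by
        rw [hudef, div_le_div_iff₀ (by positivity) (by positivity)]
        have h0 : (0:ℝ) ≤ c*(m:ℝ)*L := by positivity
        have h1 := mul_le_mul_of_nonneg_left hknR h0
        nlinarith [h1]
      have h2 : Real.log (L/(c*m)) ≤ Real.log u := Real.log_le_log (by positivity) h1
      have h3 : Real.log (L/(c*m)) = Real.log L - (Real.log c + Real.log m) := by
        rw [Real.log_div hLpos.ne' (by positivity), Real.log_mul hcpos.ne' (by positivity)]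
      have hlogL : 0 ≤ Real.log L := Real.log_nonneg hL1
      have hlogc : Real.log c < 0 := Real.log_neg hcpos hc1
      rw [hLdef]
      rw [hvdef]
      linarith
    rcases le_or_gt (2*e*c*(k:ℝ)) ((n:ℝ)*L) with hB1 | hB2
    · -- l = 2eck/(nL) ≤ 1
      set l : ℝ := 2*e*c*(k:ℝ)/((n:ℝ)*L) with hldef
      have hlpos : 0 < l := by rw [hldef]; positivity
      have hl1 : l ≤ 1 := by rw [hldef, div_le_one (by positivity)]; exact hB1
      clear_value l
      have hinv1 : (1:ℝ) ≤ 1/l := by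
        rw [le_div_iff₀ hlpos, one_mul]; exact hl1
      set J : ℕ := ⌈1/l⌉₊ with hJdef
      have hJ1 : 1 ≤ J := Nat.one_le_ceil_iff.mpr (by positivity)
      have hJ1R : (1:ℝ) ≤ (J:ℝ) := by exact_mod_cast hJ1
      have hJm : J ≤ m := by
        rw [hJdef, Nat.ceil_le]
        rw [div_le_iff₀ hlpos]
        rw [hldef, ← mul_div_assoc, le_div_iff₀ (by positivity)]
        have h0 : (0:ℝ) ≤ c*(k:ℝ)*(m:ℝ) := by positivity
        have h2 : c*(k:ℝ)*(m:ℝ) * 1 ≤ c*(k:ℝ)*(m:ℝ) * (2*e) :=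
          mul_le_mul_of_nonneg_left (by linarith) h0
        have h1 : (n:ℝ)*L ≤ c*(k:ℝ)*(m:ℝ) := le_of_lt hB
        nlinarith [h1, h2]
      have hlJ : 1 ≤ l * (J:ℝ) := by
        have h1 : (1:ℝ)/l ≤ (J:ℝ) := Nat.le_ceil _
        calc (1:ℝ) = l * (1/l) := by field_simp
          _ ≤ l * J := mul_le_mul_of_nonneg_left h1 hlpos.le
      have hMm := master r hr c0 C hc0' hc0pos hCpos m k n J hRC hm (by omega) hJ1 hJm
        l hlpos.le hlJ
      rw [← hLdef] at hMm
      refine le_trans hMm (Real.exp_le_exp.mpr ?_)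
      -- arithmetic
      have hln : l * (n:ℝ) = 2*e*c*(k:ℝ)/L := by
        rw [hldef]; field_simp
      have hJle : (J:ℝ) ≤ 2/l := by
        have h1 := Nat.ceil_lt_add_one (le_of_lt (by positivity : (0:ℝ) < 1/l))
        have h2 : (1:ℝ)/l + 1 ≤ 2/l := by
          have : (2:ℝ)/l = 1/l + 1/l := by ring
          linarith
        rw [← hJdef] at h1
        linarith
      have hX1v : 1 + v ≤ Real.log ((m:ℝ)+1) - Real.log J := by
        have hlogJ : Real.log J ≤ Real.log (2/l) :=
          Real.log_le_log (by linarith) hJle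
        have hmm : Real.log ((m:ℝ)) ≤ Real.log ((m:ℝ)+1) :=
          Real.log_le_log (by linarith) (by linarith)
        have hd : Real.log ((m:ℝ)) - Real.log (2/l) = Real.log ((m:ℝ)*l/2) := by
          rw [← Real.log_div (by linarith : ((m:ℝ)) ≠ 0) (by positivity : (2:ℝ)/l ≠ 0)]
          congr 1
          field_simp
        have hw : (m:ℝ)*l/2 = e/u := by
          rw [hldef, hudef]; field_simp
        have hlw : Real.log ((m:ℝ)*l/2) = 1 + v := by
          rw [hw, Real.log_div (by positivity) hupos.ne', hedef, Real.log_exp, hlogu]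
          ring
        rw [← hlw, ← hd]
        linarith
      set X : ℝ := Real.log ((m:ℝ)+1) - Real.log J with hXdef
      set c8 : ℝ := (1 - Real.exp (-1)) * c0 with hc8def
      clear_value X c8
      have key : 2*e*c*C + v*c*C ≤ c8 * X := by
        have h1 : c8 * (1+v) ≤ c8 * X := mul_le_mul_of_nonneg_left hX1v hc8pos.le
        have h2 : (8*e*c*C) * (1+v) ≤ c8 * (1+v) :=
          mul_le_mul_of_nonneg_right hc8ge (by linarith)
        have hcC : (0:ℝ) ≤ c*C := (mul_pos hcpos hCpos).le
        have hvcC : (0:ℝ) ≤ v*(c*C) := mul_nonneg hv.le hcC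
        have h4 : v*(c*C)*1 ≤ v*(c*C)*(8*e) :=
          mul_le_mul_of_nonneg_left (by linarith) hvcC
        have h5 : (c*C)*(2*e) ≤ (c*C)*(8*e) :=
          mul_le_mul_of_nonneg_left (by linarith) hcC
        linarith
      rw [hlogu, hln]
      have heq : 2*e*c*(k:ℝ)/L - (k:ℝ)*(c8*X/(C*L)) - (-v)*(c*(k:ℝ)/L)
          = (k:ℝ)*(2*e*c*C + v*c*C - c8*X)/(C*L) := by
        field_simp
        ring
      have hle0 : (k:ℝ)*(2*e*c*C + v*c*C - c8*X)/(C*L) ≤ 0 := by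
        apply div_nonpos_of_nonpos_of_nonneg _ (by positivity)
        apply mul_nonpos_of_nonneg_of_nonpos (by positivity)
        linarith
      linarith [heq, hle0]
    · -- l = 1, J = 1
      have hMm := master r hr c0 C hc0' hc0pos hCpos m k n 1 hRC hm (by omega) le_rfl
        (by omega) 1 zero_le_one (by norm_num)
      rw [← hLdef] at hMm
      refine le_trans hMm (Real.exp_le_exp.mpr ?_)
      have hlog1 : Real.log ((1:ℕ):ℝ) = 0 := by norm_num
      rw [hlog1]
      set X : ℝ := Real.log ((m:ℝ)+1) - 0 with hXdef
      set c8 : ℝ := (1 - Real.exp (-1)) * c0 with hc8def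
      clear_value X c8
      have hX2 : L - 1 ≤ X := by
        rw [hXdef]
        have : Real.log ((m:ℝ)) ≤ Real.log ((m:ℝ)+1) :=
          Real.log_le_log (by linarith) (by linarith)
        rw [hLdef]
        linarith
      have hnle : (n:ℝ) ≤ 2*e*c*(k:ℝ)/L := by
        rw [le_div_iff₀ hLpos]; linarith
      have key : 2*e*c*C + v*c*C ≤ c8 * X := by
        have h1 : c8 * (L-1) ≤ c8 * X := mul_le_mul_of_nonneg_left hX2 hc8pos.le
        have h2 : (8*e*c*C) * (L-1) ≤ c8 * (L-1) :=
          mul_le_mul_of_nonneg_right hc8ge (by linarith)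
        have hcC : (0:ℝ) ≤ c*C := (mul_pos hcpos hCpos).le
        have hT : (0:ℝ) ≤ (L-1)*(c*C) := mul_nonneg (by linarith) hcC
        have hE : (0:ℝ) ≤ e*(c*C) := mul_nonneg (by linarith) hcC
        have p1 : (0:ℝ) ≤ (L-1-v) * (c*C) := mul_nonneg (by linarith) hcC
        have p2 : (0:ℝ) ≤ (L-1-1/2) * (e*(c*C)) := mul_nonneg (by linarith) hE
        have p3 : ((L-1)*(c*C))*1 ≤ ((L-1)*(c*C))*(4*e) :=
          mul_le_mul_of_nonneg_left (by linarith) hT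
        linarith
      rw [hlogu]
      have heq : 1 * (n:ℝ) - (k:ℝ)*(c8*X/(C*L)) - (-v)*(c*(k:ℝ)/L)
          = ((n:ℝ) - 2*e*c*(k:ℝ)/L) + ((k:ℝ)*(2*e*c*C + v*c*C - c8*X)/(C*L)) := by
        field_simp
        ring
      have hle0 : (k:ℝ)*(2*e*c*C + v*c*C - c8*X)/(C*L) ≤ 0 := by
        apply div_nonpos_of_nonpos_of_nonneg _ (by positivity)
        apply mul_nonpos_of_nonneg_of_nonpos (by positivity)
        linarith
      linarith [heq, hle0, hnle]
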